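/- For every k ∈ I and all i, j ∈ I, the linear operators on the Fock space F(Λ_k) satisfy T_j⁺ ∘ F_i = q^{−s_j a_{ji}} · (F_i ∘ T_j⁺) and T_d ∘ F_i = q^{−δ_{0,i}} · (F_i ∘ T_d). -/

import Mathlib

open scoped Classical

noncomputable section

/-- The base field `ℚ(q)`. -/
abbrev Kq : Type := RatFunc ℚ

/-- The indeterminate `q` of `ℚ(q)`. -/
def fq : Kq := RatFunc.X

/-- The generalized Cartan matrix of affine type `C_n^{(1)}` (meaningful for `i, j ≤ n`). -/
def cartan (n i j : ℕ) : ℤ :=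
  if i = j then 2
  else if i = 1 ∧ j = 0 then -2
  else if i = n - 1 ∧ j = n then -2
  else if i + 1 = j ∨ j + 1 = i then -1
  else 0

/-- The symmetrizing integers: `s 0 = s n = 2`, otherwise `1`. -/
def sg (n i : ℕ) : ℕ := if i = 0 ∨ i = n then 2 else 1

/-- `q_i = q ^ s_i`. -/
def qi (n i : ℕ) : Kq := fq ^ sg n i

/-- The colour of the site `(l, z)`: the unique `i ∈ {0,…,n}` with
`l + z ≡ i` or `-i (mod 2n)`. -/
def colour (n l : ℕ) (z : ℤ) : ℕ :=
  let r := (((l : ℤ) + z) % (2 * (n : ℤ))).toNat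
  if r ≤ n then r else 2 * n - r

/-- A Young diagram of charge `k`: a nondecreasing sequence of integers eventually
equal to `k`. -/
structure YD (n k : ℕ) where
  y : ℕ → ℤ
  mono : Monotone y
  eventually : ∃ N, ∀ l, N ≤ l → y l = (k : ℤ)

variable {n k : ℕ}

/-- `Y` has a concave corner at site `(l, z)`. -/
def ConcaveAt (Y : YD n k) (l : ℕ) (z : ℤ) : Prop :=
  (l = 0 ∧ z = Y.y 0) ∨ (∃ m, l = m + 1 ∧ Y.y m < Y.y (m + 1) ∧ z = Y.y (m + 1))

/-- `Y` has a convex corner at site `(l, z)`. -/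
def ConvexAt (Y : YD n k) (l : ℕ) (z : ℤ) : Prop :=
  ∃ m, l = m + 1 ∧ Y.y m < Y.y (m + 1) ∧ z = Y.y m

/-- The number of `i`-coloured concave corners of `Y`. -/
def cc (i : ℕ) (Y : YD n k) : ℕ :=
  {p : ℕ × ℤ | ConcaveAt Y p.1 p.2 ∧ colour n p.1 p.2 = i}.ncard

/-- The number of `i`-coloured convex corners of `Y`. -/
def cx (i : ℕ) (Y : YD n k) : ℕ :=
  {p : ℕ × ℤ | ConvexAt Y p.1 p.2 ∧ colour n p.1 p.2 = i}.ncard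

/-- The number of `j`-coloured boxes of `Y`. -/
def boxes (j : ℕ) (Y : YD n k) : ℕ :=
  {p : ℕ × ℤ | Y.y p.1 < p.2 ∧ p.2 ≤ (k : ℤ) ∧ colour n p.1 p.2 = j}.ncard

/-- Removing the convex corner of `Y` at site `(l, z)`. -/
def removeY (Y : YD n k) (l : ℕ) (z : ℤ) (h : ConvexAt Y l z) : YD n k where
  y := Function.update Y.y (l - 1) (Y.y (l - 1) + 1)
  mono := by
    obtain ⟨m, rfl, hlt, -⟩ := h
    simp only [Nat.add_sub_cancel]
    apply monotone_nat_of_le_succ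
    intro r
    rcases eq_or_ne r m with rfl | h1
    · rw [Function.update_self, Function.update_of_ne (by omega)]
      omega
    · rcases eq_or_ne (r + 1) m with h2 | h2
      · rw [Function.update_of_ne h1, h2, Function.update_self]
        have hm := Y.mono (Nat.le_add_right r 1)
        rw [h2] at hm
        omega
      · rw [Function.update_of_ne h1, Function.update_of_ne h2]
        exact Y.mono (Nat.le_add_right r 1)
  eventually := by
    obtain ⟨N, hN⟩ := Y.eventually
    exact ⟨N + l + 1, fun r hr => by
      rw [Function.update_of_ne (by omega)]
      exact hN r (by omega)⟩

/-- Adding a box at the concave corner of `Y` at site `(l, z)`. -/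
def addY (Y : YD n k) (l : ℕ) (z : ℤ) (h : ConcaveAt Y l z) : YD n k where
  y := Function.update Y.y l (Y.y l - 1)
  mono := by
    apply monotone_nat_of_le_succ
    intro r
    rcases eq_or_ne r l with rfl | h1
    · rw [Function.update_self, Function.update_of_ne (by omega)]
      have := Y.mono (Nat.le_add_right r 1)
      omega
    · rcases eq_or_ne (r + 1) l with h2 | h2
      · rw [Function.update_of_ne h1, h2, Function.update_self]
        rcases h with ⟨hl0, -⟩ | ⟨m, hm, hlt, -⟩
        · omega
        · have hrm : r = m := by omega
          subst hrm
          rw [← hm] at hlt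
          omega
      · rw [Function.update_of_ne h1, Function.update_of_ne h2]
        exact Y.mono (Nat.le_add_right r 1)
  eventually := by
    obtain ⟨N, hN⟩ := Y.eventually
    exact ⟨N + l + 1, fun r hr => by
      rw [Function.update_of_ne (by omega)]
      exact hN r (by omega)⟩

/-- The Fock space `F(Λ_k)`: the `ℚ(q)`-vector space with basis the Young diagrams of
charge `k`. -/
abbrev Fock (n k : ℕ) := YD n k →₀ Kq

/-- The basis vector of the Fock space corresponding to a Young diagram. -/
def fockB (Y : YD n k) : Fock n k := Finsupp.single Y 1

/-- The linear operator on the Fock space determined by its values on basis vectors. -/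
def lift (g : YD n k → Fock n k) : Fock n k →ₗ[Kq] Fock n k :=
  Finsupp.lsum Kq fun Y => LinearMap.toSpanSingleton Kq (Fock n k) (g Y)

/-- The single-site operator `E_{(l,z)}`. -/
def Esite (n k : ℕ) (l : ℕ) (z : ℤ) : Fock n k →ₗ[Kq] Fock n k :=
  lift fun Y => if h : ConvexAt Y l z then fockB (removeY Y l z h) else 0

/-- The single-site operator `F_{(l,z)}`. -/
def Fsite (n k : ℕ) (l : ℕ) (z : ℤ) : Fock n k →ₗ[Kq] Fock n k :=
  lift fun Y => if h : ConcaveAt Y l z then fockB (addY Y l z h) else 0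

/-- `a(i,l,z,Y)`: the number of `i`-coloured concave corners at sites greater than `(l,z)`
minus the number of `i`-coloured convex corners at sites greater than `(l,z)`. -/
def aExp (i l : ℕ) (z : ℤ) (Y : YD n k) : ℤ :=
  ({p : ℕ × ℤ | ConcaveAt Y p.1 p.2 ∧ colour n p.1 p.2 = i ∧
      (l : ℤ) + z < (p.1 : ℤ) + p.2}.ncard : ℤ)
  - ({p : ℕ × ℤ | ConvexAt Y p.1 p.2 ∧ colour n p.1 p.2 = i ∧
      (l : ℤ) + z < (p.1 : ℤ) + p.2}.ncard : ℤ)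

/-- `b(i,l,z,Y)`: the number of `i`-coloured convex corners at sites smaller than `(l,z)`
minus the number of `i`-coloured concave corners at sites smaller than `(l,z)`. -/
def bExp (i l : ℕ) (z : ℤ) (Y : YD n k) : ℤ :=
  ({p : ℕ × ℤ | ConvexAt Y p.1 p.2 ∧ colour n p.1 p.2 = i ∧
      (p.1 : ℤ) + p.2 < (l : ℤ) + z}.ncard : ℤ)
  - ({p : ℕ × ℤ | ConcaveAt Y p.1 p.2 ∧ colour n p.1 p.2 = i ∧
      (p.1 : ℤ) + p.2 < (l : ℤ) + z}.ncard : ℤ)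

/-- The Chevalley-type operator `E_i` on the Fock space: on a basis diagram `Y`,
`E_i Y = Σ_{(l,z) : i-coloured convex corner of Y} q_i^{a(i,l,z,Y)} • (Y with corner removed)`,
where the power of `q_i` records the product of the `T⁺` factors at larger `i`-coloured sites. -/
def Ei (n k i : ℕ) : Fock n k →ₗ[Kq] Fock n k :=
  lift fun Y => ∑ᶠ p : ℕ × ℤ,
    if h : ConvexAt Y p.1 p.2 ∧ colour n p.1 p.2 = i then
      (qi n i ^ aExp i p.1 p.2 Y) • fockB (removeY Y p.1 p.2 h.1)
    else 0

/-- The Chevalley-type operator `F_i` on the Fock space: on a basis diagram `Y`,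
`F_i Y = Σ_{(l,z) : i-coloured concave corner of Y} q_i^{b(i,l,z,Y)} • (Y with box added)`,
where the power of `q_i` records the product of the `T⁻` factors at smaller `i`-coloured sites. -/
def Fi (n k i : ℕ) : Fock n k →ₗ[Kq] Fock n k :=
  lift fun Y => ∑ᶠ p : ℕ × ℤ,
    if h : ConcaveAt Y p.1 p.2 ∧ colour n p.1 p.2 = i then
      (qi n i ^ bExp i p.1 p.2 Y) • fockB (addY Y p.1 p.2 h.1)
    else 0

/-- The operator `T_i⁺ = ∏_{(l,z) of colour i} T⁺_{(l,z)}`: it multiplies a basis diagram `Y`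
by `q_i^{cc_i(Y) - cx_i(Y)}`. -/
def Tplus (n k i : ℕ) : Fock n k →ₗ[Kq] Fock n k :=
  lift fun Y => (qi n i ^ ((cc i Y : ℤ) - (cx i Y : ℤ))) • fockB Y

/-- The operator `T_i⁻ = ∏_{(l,z) of colour i} T⁻_{(l,z)}`: it multiplies a basis diagram `Y`
by `q_i^{-(cc_i(Y) - cx_i(Y))}`. -/
def Tminus (n k i : ℕ) : Fock n k →ₗ[Kq] Fock n k :=
  lift fun Y => (qi n i ^ (-((cc i Y : ℤ) - (cx i Y : ℤ)))) • fockB Y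

/-- The operator `T_d`: it multiplies a basis diagram `Y` by `q^{-b_0(Y)}`. -/
def Td (n k : ℕ) : Fock n k →ₗ[Kq] Fock n k :=
  lift fun Y => (fq ^ (-(boxes 0 Y : ℤ))) • fockB Y

/-- The quantum integer `[m]_x = (x^m - x^{-m})/(x - x^{-1})`. -/
def qInt (x : Kq) (m : ℕ) : Kq := (x ^ m - x⁻¹ ^ m) / (x - x⁻¹)

/-- The quantum factorial `[m]_x!`. -/
def qFact (x : Kq) : ℕ → Kq
  | 0 => 1
  | m + 1 => qInt x (m + 1) * qFact x m

/-- The quantum binomial coefficient `[m choose r]_x`. -/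
def qBinom (x : Kq) (m r : ℕ) : Kq := qFact x m / (qFact x r * qFact x (m - r))

/-- The empty Young diagram `φ_k` of charge `k`. -/
def phiYD (n k : ℕ) : YD n k :=
  ⟨fun _ => (k : ℤ), monotone_const, ⟨0, fun _ _ => rfl⟩⟩

/-- `Y` has an (either concave or convex) corner at site `(l, z)`. -/
def CornerAt (Y : YD n k) (l : ℕ) (z : ℤ) : Prop := ConcaveAt Y l z ∨ ConvexAt Y l z

/-- `L` lists the sites of the `i`-coloured corners of `Y` in strictly decreasing order. -/
def Enumerates (Y : YD n k) (i : ℕ) (L : List (ℕ × ℤ)) : Prop :=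
  (∀ p : ℕ × ℤ, p ∈ L ↔ (CornerAt Y p.1 p.2 ∧ colour n p.1 p.2 = i)) ∧
  L.Chain' (fun p q => (q.1 : ℤ) + q.2 < (p.1 : ℤ) + p.2)

/-- The `i`-signature of `Y` along the list `L` of its `i`-coloured corner sites:
each site is tagged `true` if the corner there is convex (`σ = 1`) and `false`
if it is concave (`σ = 0`). -/
def sigL (Y : YD n k) (L : List (ℕ × ℤ)) : List ((ℕ × ℤ) × Bool) :=
  L.map fun p => (p, if ConvexAt Y p.1 p.2 then true else false)

/-- Reduction of a signature: repeatedly delete adjacent pairs `(0, 1)` (a concave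
entry immediately followed by a convex entry); the surviving entries are those
indexed by `J(σ)`. -/
def reduceSig : List ((ℕ × ℤ) × Bool) → List ((ℕ × ℤ) × Bool) :=
  List.foldr (fun x acc =>
    if x.2 = false ∧ acc.head?.map Prod.snd = some true then acc.tail else x :: acc) []

/-- The site at which `f̃_i` adds a box: the corner of the smallest index `r ∈ J(σ)`
with `σ_r = 0` (`none` if there is no such index, i.e. `f̃_i Y = 0`). -/
def ftildeSite (Y : YD n k) (i : ℕ) (L : List (ℕ × ℤ)) : Option (ℕ × ℤ) :=
  ((reduceSig (sigL Y L)).find? (fun x => !x.2)).map Prod.fst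

/-- The site at which `ẽ_i` removes a box: the corner of the largest index `r ∈ J(σ)`
with `σ_r = 1` (`none` if there is no such index, i.e. `ẽ_i Y = 0`). -/
def etildeSite (Y : YD n k) (i : ℕ) (L : List (ℕ × ℤ)) : Option (ℕ × ℤ) :=
  (((reduceSig (sigL Y L)).filter (fun x => x.2)).getLast?).map Prod.fst

section Aux

lemma fq_ne_zero : (fq : Kq) ≠ 0 := RatFunc.X_ne_zero

lemma lift_fockB (g : YD n k → Fock n k) (Y : YD n k) : lift g (fockB Y) = g Y := by
  simp [lift, fockB, Finsupp.lsum_single]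

lemma yd_le (Y : YD n k) (m : ℕ) : Y.y m ≤ (k : ℤ) := by
  obtain ⟨N, hN⟩ := Y.eventually
  calc Y.y m ≤ Y.y (max m N) := Y.mono (le_max_left _ _)
    _ = k := hN _ (le_max_right _ _)

lemma concave_iff (Y : YD n k) (l : ℕ) (z : ℤ) :
    ConcaveAt Y l z ↔ z = Y.y l ∧ (l = 0 ∨ Y.y (l - 1) < Y.y l) := by
  constructor
  · rintro (⟨rfl, rfl⟩ | ⟨m, rfl, hm, rfl⟩)
    · exact ⟨rfl, Or.inl rfl⟩
    · exact ⟨rfl, Or.inr (by simpa using hm)⟩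
  · rintro ⟨rfl, h0 | hlt⟩
    · subst h0; exact Or.inl ⟨rfl, rfl⟩
    · have hl : l ≠ 0 := by rintro rfl; simp at hlt
      exact Or.inr ⟨l - 1, by omega, by convert hlt using 3 <;> omega, by
        congr 1; omega⟩

lemma concave_z {Y : YD n k} {l : ℕ} {z : ℤ} (h : ConcaveAt Y l z) : z = Y.y l :=
  ((concave_iff Y l z).1 h).1

lemma convex_iff (Y : YD n k) (l : ℕ) (z : ℤ) :
    ConvexAt Y l z ↔ l ≠ 0 ∧ Y.y (l - 1) < Y.y l ∧ z = Y.y (l - 1) := by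
  constructor
  · rintro ⟨m, rfl, hm, rfl⟩
    simpa using hm
  · rintro ⟨hl, hlt, rfl⟩
    exact ⟨l - 1, by omega, by convert hlt using 3 <;> omega, by congr 1⟩

lemma colour_congr {l l' : ℕ} {z z' : ℤ} (h : (l : ℤ) + z = (l' : ℤ) + z') :
    colour n l z = colour n l' z' := by
  unfold colour; rw [h]

lemma colour_eq_of_emod {l : ℕ} {z : ℤ} {r : ℕ}
    (hr : ((l : ℤ) + z) % (2 * (n : ℤ)) = (r : ℤ)) :
    colour n l z = if r ≤ n then r else 2 * n - r := by
  unfold colour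
  rw [hr, Int.toNat_natCast]

set_option maxHeartbeats 1600000 in
/-- The core arithmetic lemma about colours of neighbouring sites and the Cartan matrix. -/
lemma key_colour (hn : 2 ≤ n) {j : ℕ} (hj : j ≤ n) (l : ℕ) (z : ℤ) :
    (if colour n l (z - 1) = j then (1 : ℤ) else 0)
      + (if colour n (l + 1) z = j then 1 else 0)
      - (if colour n l z = j then 1 else 0) - (if colour n l z = j then 1 else 0)
      = - cartan n j (colour n l z) := by
  have hM : (0 : ℤ) < 2 * (n : ℤ) := by positivity
  set M : ℤ := 2 * (n : ℤ) with hMdef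
  set t : ℤ := (l : ℤ) + z with ht
  have hr0 : 0 ≤ t % M := Int.emod_nonneg _ (by omega)
  have hrM : t % M < M := Int.emod_lt_of_pos _ hM
  set R : ℕ := (t % M).toNat with hRdef
  have hRe : (R : ℤ) = t % M := Int.toNat_of_nonneg hr0
  have hRlt : R < 2 * n := by omega
  have h1M : (1 : ℤ) % M = 1 := Int.emod_eq_of_lt (by norm_num) (by omega)
  have hmid : colour n l z = if R ≤ n then R else 2 * n - R :=
    colour_eq_of_emod (by rw [← ht, hRe])
  have hsub1 : ((l : ℤ) + (z - 1)) % M = ((R : ℤ) - 1) % M := by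
    have : (l : ℤ) + (z - 1) = t - 1 := by rw [ht]; ring
    rw [this, Int.sub_emod, h1M, hRe]
  have hadd1 : (((l + 1 : ℕ) : ℤ) + z) % M = ((R : ℤ) + 1) % M := by
    have : ((l + 1 : ℕ) : ℤ) + z = t + 1 := by push_cast [ht]; ring
    rw [this, Int.add_emod, h1M, hRe]
  rcases Nat.eq_zero_or_pos R with hR0 | hR0
  · -- R = 0
    have hm1 : ((R : ℤ) - 1) % M = ((2 * n - 1 : ℕ) : ℤ) := by
      have he : ((R : ℤ) - 1) = ((2 * n - 1 : ℕ) : ℤ) + M * (-1) := by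
        rw [hMdef]; omega
      have h0 : (0 : ℤ) ≤ ((2 * n - 1 : ℕ) : ℤ) := by omega
      have h1 : ((2 * n - 1 : ℕ) : ℤ) < M := by omega
      rw [he, Int.add_mul_emod_self_left, Int.emod_eq_of_lt h0 h1]
    have hp1 : ((R : ℤ) + 1) % M = ((1 : ℕ) : ℤ) := by
      have h0 : (0 : ℤ) ≤ (R : ℤ) + 1 := by omega
      have h1 : (R : ℤ) + 1 < M := by omega
      rw [Int.emod_eq_of_lt h0 h1]
      omega
    have hcm : colour n l (z - 1) = 1 := by
      rw [colour_eq_of_emod (by rw [hsub1, hm1])]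
      split_ifs <;> omega
    have hcp : colour n (l + 1) z = 1 := by
      rw [colour_eq_of_emod (by rw [hadd1, hp1])]
      split_ifs <;> omega
    have hi : colour n l z = 0 := by
      rw [hmid]
      split_ifs <;> omega
    rw [hcm, hcp, hi]
    unfold cartan
    split_ifs <;> first | omega | (rename_i hor; rcases hor with h | h <;> first | exact h.elim | omega)
  · -- R ≥ 1
    have hm1 : ((R : ℤ) - 1) % M = ((R - 1 : ℕ) : ℤ) := by
      have h0 : (0 : ℤ) ≤ (R : ℤ) - 1 := by omega
      have h1 : (R : ℤ) - 1 < M := by omega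
      rw [Int.emod_eq_of_lt h0 h1]
      omega
    have hcm : colour n l (z - 1) = if R - 1 ≤ n then R - 1 else 2 * n - (R - 1) :=
      colour_eq_of_emod (by rw [hsub1, hm1])
    rcases eq_or_ne (R + 1) (2 * n) with hRtop | hRtop
    · have hp1 : ((R : ℤ) + 1) % M = ((0 : ℕ) : ℤ) := by
        have : ((R : ℤ) + 1) = M := by omega
        rw [this]; simp
      have hcp : colour n (l + 1) z = 0 := by
        rw [colour_eq_of_emod (by rw [hadd1, hp1])]
        split_ifs <;> omega
      have hcm' : colour n l (z - 1) = 2 := by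
        rw [hcm]
        split_ifs <;> omega
      have hi : colour n l z = 1 := by
        rw [hmid]
        split_ifs <;> omega
      rw [hcm', hcp, hi]
      unfold cartan
      split_ifs <;> first | omega | (rename_i hor; rcases hor with h | h <;> first | exact h.elim | omega)
    · have hp1 : ((R : ℤ) + 1) % M = ((R + 1 : ℕ) : ℤ) := by
        have h0 : (0 : ℤ) ≤ (R : ℤ) + 1 := by omega
        have h1 : (R : ℤ) + 1 < M := by omega
        rw [Int.emod_eq_of_lt h0 h1]
        omega
      have hcp : colour n (l + 1) z = if R + 1 ≤ n then R + 1 else 2 * n - (R + 1) :=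
        colour_eq_of_emod (by rw [hadd1, hp1])
      rcases lt_or_ge R n with hRn | hRn
      · rcases eq_or_ne (R + 1) n with hR1n | hR1n
        · -- R + 1 = n
          have hcm' : colour n l (z - 1) = R - 1 := by rw [hcm]; split_ifs <;> omega
          have hcp' : colour n (l + 1) z = R + 1 := by rw [hcp]; split_ifs <;> omega
          have hi : colour n l z = R := by rw [hmid]; split_ifs <;> omega
          rw [hcm', hcp', hi]
          unfold cartan
          split_ifs <;> first | omega | (rename_i hor; rcases hor with h | h <;> first | exact h.elim | omega)
        · have hcm' : colour n l (z - 1) = R - 1 := by rw [hcm]; split_ifs <;> omega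
          have hcp' : colour n (l + 1) z = R + 1 := by rw [hcp]; split_ifs <;> omega
          have hi : colour n l z = R := by rw [hmid]; split_ifs <;> omega
          rw [hcm', hcp', hi]
          unfold cartan
          split_ifs <;> first | omega | (rename_i hor; rcases hor with h | h <;> first | exact h.elim | omega)
      · rcases eq_or_ne R n with hRn' | hRn'
        · -- R = n
          have hcm' : colour n l (z - 1) = n - 1 := by rw [hcm]; split_ifs <;> omega
          have hcp' : colour n (l + 1) z = n - 1 := by rw [hcp]; split_ifs <;> omega
          have hi : colour n l z = n := by rw [hmid]; split_ifs <;> omega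
          rw [hcm', hcp', hi]
          unfold cartan
          split_ifs <;> first | omega | (rename_i hor; rcases hor with h | h <;> first | exact h.elim | omega)
        · -- n < R < 2n - 1
          have hcm' : colour n l (z - 1) = 2 * n - R + 1 := by rw [hcm]; split_ifs <;> omega
          have hcp' : colour n (l + 1) z = 2 * n - R - 1 := by rw [hcp]; split_ifs <;> omega
          have hi : colour n l z = 2 * n - R := by rw [hmid]; split_ifs <;> omega
          rw [hcm', hcp', hi]
          unfold cartan
          split_ifs <;> first | omega | (rename_i hor; rcases hor with h | h <;> first | exact h.elim | omega)

lemma addY_y (Y : YD n k) (l : ℕ) (z : ℤ) (h : ConcaveAt Y l z) :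
    (addY Y l z h).y = Function.update Y.y l (Y.y l - 1) := rfl

lemma cc_card (j : ℕ) (Y : YD n k) (N : ℕ) (hN : ∀ m, N ≤ m → Y.y m = (k : ℤ)) :
    (cc j Y : ℤ) = ∑ a ∈ Finset.range (N + 1),
      (if (a = 0 ∨ Y.y (a - 1) < Y.y a) ∧ colour n a (Y.y a) = j then (1 : ℤ) else 0) := by
  have hset : {p : ℕ × ℤ | ConcaveAt Y p.1 p.2 ∧ colour n p.1 p.2 = j}
      = (fun a => (a, Y.y a)) ''
        ↑(Finset.filter (fun a => (a = 0 ∨ Y.y (a - 1) < Y.y a) ∧ colour n a (Y.y a) = j)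
          (Finset.range (N + 1))) := by
    ext ⟨a, b⟩
    simp only [Set.mem_setOf_eq, Set.mem_image, Finset.coe_filter, Finset.mem_range,
      Set.mem_setOf_eq, concave_iff]
    constructor
    · rintro ⟨⟨rfl, hcond⟩, hcol⟩
      refine ⟨a, ⟨?_, hcond, hcol⟩, rfl⟩
      by_contra hA
      rcases hcond with rfl | hlt
      · omega
      · have h1 : Y.y (a - 1) = k := hN _ (by omega)
        have h2 : Y.y a = k := hN _ (by omega)
        omega
    · rintro ⟨a', ⟨_, hcond, hcol⟩, heq⟩
      obtain ⟨rfl, rfl⟩ : a' = a ∧ Y.y a' = b := by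
        constructor
        · exact congrArg Prod.fst heq
        · exact congrArg Prod.snd heq
      exact ⟨⟨rfl, hcond⟩, hcol⟩
  unfold cc
  rw [hset, Set.ncard_image_of_injective _ (fun a b hab => congrArg Prod.fst hab),
    Set.ncard_coe_finset, Finset.card_filter]
  push_cast
  rfl

lemma cx_card (j : ℕ) (Y : YD n k) (N : ℕ) (hN : ∀ m, N ≤ m → Y.y m = (k : ℤ)) :
    (cx j Y : ℤ) = ∑ a ∈ Finset.range (N + 1),
      (if ¬(a = 0) ∧ Y.y (a - 1) < Y.y a ∧ colour n a (Y.y (a - 1)) = j then (1 : ℤ) else 0) := by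
  have hset : {p : ℕ × ℤ | ConvexAt Y p.1 p.2 ∧ colour n p.1 p.2 = j}
      = (fun a => (a, Y.y (a - 1))) ''
        ↑(Finset.filter (fun a => ¬(a = 0) ∧ Y.y (a - 1) < Y.y a ∧ colour n a (Y.y (a - 1)) = j)
          (Finset.range (N + 1))) := by
    ext ⟨a, b⟩
    simp only [Set.mem_setOf_eq, Set.mem_image, Finset.coe_filter, Finset.mem_range,
      Set.mem_setOf_eq, convex_iff]
    constructor
    · rintro ⟨⟨hl, hlt, rfl⟩, hcol⟩
      refine ⟨a, ⟨?_, hl, hlt, hcol⟩, rfl⟩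
      by_contra hA
      have h1 : Y.y (a - 1) = k := hN _ (by omega)
      have h2 : Y.y a = k := hN _ (by omega)
      omega
    · rintro ⟨a', ⟨_, hl, hlt, hcol⟩, heq⟩
      obtain ⟨rfl, rfl⟩ : a' = a ∧ Y.y (a' - 1) = b := by
        constructor
        · exact congrArg Prod.fst heq
        · exact congrArg Prod.snd heq
      exact ⟨⟨hl, hlt, rfl⟩, hcol⟩
  unfold cx
  have hinj : Function.Injective (fun a : ℕ => (a, Y.y (a - 1))) :=
    fun a b hab => congrArg Prod.fst hab
  rw [hset, Set.ncard_image_of_injective _ hinj, Set.ncard_coe_finset, Finset.card_filter]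
  push_cast
  rfl

/-- The key combinatorial lemma: adding a box at an `i`-coloured concave corner changes
`cc_j - cx_j` by `-a_{ji}`. -/
lemma ccx_change (hn : 2 ≤ n) {j : ℕ} (hj : j ≤ n) (Y : YD n k) (l : ℕ) (z : ℤ)
    (h : ConcaveAt Y l z) :
    ((cc j (addY Y l z h) : ℤ) - (cx j (addY Y l z h) : ℤ))
      = ((cc j Y : ℤ) - (cx j Y : ℤ)) - cartan n j (colour n l z) := by
  have hz := concave_z h
  subst hz
  set Y' := addY Y l (Y.y l) h with hY'
  obtain ⟨N₀, hN₀⟩ := Y.eventually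
  set N : ℕ := N₀ + l + 2 with hNdef
  have hN : ∀ m, N ≤ m → Y.y m = (k : ℤ) := fun m hm => hN₀ m (by omega)
  have hN' : ∀ m, N ≤ m → Y'.y m = (k : ℤ) := by
    intro m hm
    rw [hY', addY_y, Function.update_of_ne (by omega)]
    exact hN m hm
  have hYl : Y'.y l = Y.y l - 1 := by rw [hY', addY_y, Function.update_self]
  have hYne : ∀ a, a ≠ l → Y'.y a = Y.y a := by
    intro a ha; rw [hY', addY_y, Function.update_of_ne ha]
  have hcond := ((concave_iff Y l (Y.y l)).1 h).2
  set F : ℕ → ℤ := fun a =>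
    ((if (a = 0 ∨ Y'.y (a - 1) < Y'.y a) ∧ colour n a (Y'.y a) = j then (1 : ℤ) else 0)
      - (if ¬(a = 0) ∧ Y'.y (a - 1) < Y'.y a ∧ colour n a (Y'.y (a - 1)) = j then (1 : ℤ) else 0))
      - ((if (a = 0 ∨ Y.y (a - 1) < Y.y a) ∧ colour n a (Y.y a) = j then (1 : ℤ) else 0)
      - (if ¬(a = 0) ∧ Y.y (a - 1) < Y.y a ∧ colour n a (Y.y (a - 1)) = j then (1 : ℤ) else 0))
    with hF
  have hsum : ∑ a ∈ Finset.range (N + 1), F a = - cartan n j (colour n l (Y.y l)) := by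
    have hsubset : ({l, l + 1} : Finset ℕ) ⊆ Finset.range (N + 1) := by
      intro a ha
      simp only [Finset.mem_insert, Finset.mem_singleton] at ha
      simp only [Finset.mem_range]
      omega
    rw [← Finset.sum_subset hsubset (by
      intro a _ ha
      simp only [Finset.mem_insert, Finset.mem_singleton, not_or] at ha
      have h1 : Y'.y a = Y.y a := hYne a ha.1
      have h2 : Y'.y (a - 1) = Y.y (a - 1) := hYne (a - 1) (by omega)
      rw [hF]
      simp only [h1, h2]
      ring)]
    rw [Finset.sum_pair (by omega : l ≠ l + 1)]
    have hFl : F l = (if colour n l (Y.y l - 1) = j then (1 : ℤ) else 0)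
        - (if colour n l (Y.y l) = j then 1 else 0) := by
      rcases eq_or_ne l 0 with rfl | hl0
      · have h0 : Y'.y (0 - 1) = Y'.y 0 := rfl
        rw [hF]
        simp only [h0, hYl]
        simp
      · have hlt : Y.y (l - 1) < Y.y l := by
          rcases hcond with h' | h'
          · exact absurd h' hl0
          · exact h'
        have hym : Y'.y (l - 1) = Y.y (l - 1) := hYne (l - 1) (by omega)
        rw [hF]
        simp only [hym, hYl, hl0]
        rcases eq_or_ne (Y.y (l - 1)) (Y.y l - 1) with heq | hne
        · rw [heq]
          simp [hlt]
        · have hlt' : Y.y (l - 1) < Y.y l - 1 := by omega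
          simp [hlt, hlt']
    have hFl1 : F (l + 1) = (if colour n (l + 1) (Y.y l) = j then (1 : ℤ) else 0)
        - (if colour n l (Y.y l) = j then 1 else 0) := by
      have h1 : Y'.y (l + 1) = Y.y (l + 1) := hYne (l + 1) (by omega)
      have h2 : Y'.y (l + 1 - 1) = Y.y l - 1 := by
        simp only [Nat.add_sub_cancel]; exact hYl
      have hle : Y.y l ≤ Y.y (l + 1) := Y.mono (by omega)
      have hcc : colour n (l + 1) (Y.y l - 1) = colour n l (Y.y l) := by
        apply colour_congr; push_cast; ring
      rw [hF]
      simp only [h1, h2, hYl, Nat.add_sub_cancel, hcc]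
      rcases eq_or_ne (Y.y l) (Y.y (l + 1)) with heq | hne
      · rw [← heq]
        simp [show Y.y l - 1 < Y.y l by omega, lt_irrefl]
      · have hlt : Y.y l < Y.y (l + 1) := by omega
        simp [hlt, show Y.y l - 1 < Y.y (l + 1) by omega]
    rw [hFl, hFl1]
    have hkey := key_colour (n := n) hn hj l (Y.y l)
    linarith [hkey]
  have e1 := cc_card (n := n) (k := k) j Y' N hN'
  have e2 := cx_card (n := n) (k := k) j Y' N hN'
  have e3 := cc_card (n := n) (k := k) j Y N hN
  have e4 := cx_card (n := n) (k := k) j Y N hN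
  have expand : ∑ a ∈ Finset.range (N + 1), F a
      = (∑ a ∈ Finset.range (N + 1),
          (if (a = 0 ∨ Y'.y (a - 1) < Y'.y a) ∧ colour n a (Y'.y a) = j then (1 : ℤ) else 0)
        - ∑ a ∈ Finset.range (N + 1),
          (if ¬(a = 0) ∧ Y'.y (a - 1) < Y'.y a ∧ colour n a (Y'.y (a - 1)) = j then (1 : ℤ) else 0))
        - (∑ a ∈ Finset.range (N + 1),
          (if (a = 0 ∨ Y.y (a - 1) < Y.y a) ∧ colour n a (Y.y a) = j then (1 : ℤ) else 0)
        - ∑ a ∈ Finset.range (N + 1),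
          (if ¬(a = 0) ∧ Y.y (a - 1) < Y.y a ∧ colour n a (Y.y (a - 1)) = j then (1 : ℤ) else 0)) := by
    rw [← Finset.sum_sub_distrib, ← Finset.sum_sub_distrib, ← Finset.sum_sub_distrib]
  rw [e1, e2, e3, e4] at *
  linarith [hsum, expand]

lemma boxes_finite (Y : YD n k) (j : ℕ) :
    {p : ℕ × ℤ | Y.y p.1 < p.2 ∧ p.2 ≤ (k : ℤ) ∧ colour n p.1 p.2 = j}.Finite := by
  obtain ⟨N, hN⟩ := Y.eventually
  apply Set.Finite.subset
    ((Finset.range N ×ˢ Finset.Icc (Y.y 0 + 1) (k : ℤ)).finite_toSet)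
  rintro ⟨a, b⟩ ⟨h1, h2, -⟩
  dsimp only at h1 h2
  simp only [Finset.coe_product, Set.mem_prod, Finset.mem_coe, Finset.mem_range,
    Finset.mem_Icc]
  refine ⟨?_, ?_, h2⟩
  · by_contra hA
    have : Y.y a = k := hN a (by omega)
    omega
  · have : Y.y 0 ≤ Y.y a := Y.mono (Nat.zero_le a)
    omega

lemma boxes_add (Y : YD n k) (l : ℕ) (z : ℤ) (h : ConcaveAt Y l z) :
    (boxes 0 (addY Y l z h) : ℤ)
      = (boxes 0 Y : ℤ) + (if colour n l z = 0 then 1 else 0) := by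
  have hz := concave_z h
  subst hz
  have hzk : Y.y l ≤ (k : ℤ) := yd_le Y l
  unfold boxes
  by_cases hc : colour n l (Y.y l) = 0
  · rw [if_pos hc]
    have hset : {p : ℕ × ℤ | (addY Y l (Y.y l) h).y p.1 < p.2 ∧ p.2 ≤ (k : ℤ) ∧
          colour n p.1 p.2 = 0}
        = insert (l, Y.y l) {p : ℕ × ℤ | Y.y p.1 < p.2 ∧ p.2 ≤ (k : ℤ) ∧
          colour n p.1 p.2 = 0} := by
      ext ⟨a, b⟩
      simp only [Set.mem_setOf_eq, Set.mem_insert_iff, addY_y, Prod.mk.injEq]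
      rcases eq_or_ne a l with rfl | ha
      · rw [Function.update_self]
        constructor
        · rintro ⟨h1, h2, h3⟩
          rcases eq_or_ne b (Y.y a) with rfl | hb
          · exact Or.inl ⟨rfl, rfl⟩
          · exact Or.inr ⟨by omega, h2, h3⟩
        · rintro (⟨-, rfl⟩ | ⟨h1, h2, h3⟩)
          · exact ⟨by omega, hzk, hc⟩
          · exact ⟨by omega, h2, h3⟩
      · rw [Function.update_of_ne ha]
        constructor
        · rintro ⟨h1, h2, h3⟩
          exact Or.inr ⟨h1, h2, h3⟩
        · rintro (⟨rfl, -⟩ | ⟨h1, h2, h3⟩)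
          · exact absurd rfl ha
          · exact ⟨h1, h2, h3⟩
    rw [hset, Set.ncard_insert_of_notMem (by simp) (boxes_finite Y 0)]
    push_cast
    ring
  · rw [if_neg hc]
    have hset : {p : ℕ × ℤ | (addY Y l (Y.y l) h).y p.1 < p.2 ∧ p.2 ≤ (k : ℤ) ∧
          colour n p.1 p.2 = 0}
        = {p : ℕ × ℤ | Y.y p.1 < p.2 ∧ p.2 ≤ (k : ℤ) ∧ colour n p.1 p.2 = 0} := by
      ext ⟨a, b⟩
      simp only [Set.mem_setOf_eq, addY_y]
      rcases eq_or_ne a l with rfl | ha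
      · rw [Function.update_self]
        constructor
        · rintro ⟨h1, h2, h3⟩
          rcases eq_or_ne b (Y.y a) with rfl | hb
          · exact absurd h3 hc
          · exact ⟨by omega, h2, h3⟩
        · rintro ⟨h1, h2, h3⟩
          exact ⟨by omega, h2, h3⟩
      · rw [Function.update_of_ne ha]
    rw [hset]
    ring

lemma concave_finite (Y : YD n k) (i : ℕ) :
    {p : ℕ × ℤ | ConcaveAt Y p.1 p.2 ∧ colour n p.1 p.2 = i}.Finite := by
  obtain ⟨N, hN⟩ := Y.eventually
  apply Set.Finite.subset (Set.Finite.image (fun a => (a, Y.y a)) (Set.finite_Iic N))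
  rintro ⟨a, b⟩ ⟨hca, -⟩
  obtain ⟨rfl, hcond⟩ := (concave_iff Y a b).1 hca
  refine ⟨a, ?_, rfl⟩
  simp only [Set.mem_Iic]
  by_contra hA
  rcases hcond with h' | h'
  · omega
  · have h1 : Y.y (a - 1) = k := hN _ (by omega)
    have h2 : Y.y a = k := hN _ (by omega)
    omega

lemma qi_zpow (j : ℕ) (m : ℤ) : qi n j ^ m = fq ^ ((sg n j : ℤ) * m) := by
  rw [qi, ← zpow_natCast fq, ← zpow_mul]

lemma ccx_change' (hn : 2 ≤ n) {i j : ℕ} (hj : j ≤ n) (Y : YD n k) (l : ℕ) (z : ℤ)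
    (h : ConcaveAt Y l z) (hc : colour n l z = i) :
    ((cc j (addY Y l z h) : ℤ) - (cx j (addY Y l z h) : ℤ))
      = ((cc j Y : ℤ) - (cx j Y : ℤ)) - cartan n j i := by
  rw [← hc]
  exact ccx_change hn hj Y l z h

lemma boxes_add' {i : ℕ} (Y : YD n k) (l : ℕ) (z : ℤ) (h : ConcaveAt Y l z)
    (hc : colour n l z = i) :
    (boxes 0 (addY Y l z h) : ℤ)
      = (boxes 0 Y : ℤ) + (if i = 0 then 1 else 0) := by
  rw [← hc]
  exact boxes_add Y l z h

lemma map_finsum_lin (g : Fock n k →ₗ[Kq] Fock n k) {f : (ℕ × ℤ) → Fock n k}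
    (hf : (Function.support f).Finite) : g (∑ᶠ p, f p) = ∑ᶠ p, g (f p) :=
  g.toAddMonoidHom.map_finsum hf

end Aux

/-- For every `k ∈ I` and all `i, j ∈ I`, on the Fock space `F(Λ_k)` we have
`T_j⁺ ∘ F_i = q^{-s_j a_{ji}} • (F_i ∘ T_j⁺)` and `T_d ∘ F_i = q^{-δ_{0i}} • (F_i ∘ T_d)`. -/
theorem fock_Tplus_Td_Fi_comm (n : ℕ) (hn : 2 ≤ n) (k i j : ℕ)
    (hk : k ≤ n) (hi : i ≤ n) (hj : j ≤ n) :
    Tplus n k j ∘ₗ Fi n k i = (fq ^ (-((sg n j : ℤ) * cartan n j i))) • (Fi n k i ∘ₗ Tplus n k j) ∧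
    Td n k ∘ₗ Fi n k i = (fq ^ (-(if i = 0 then (1 : ℤ) else 0))) • (Fi n k i ∘ₗ Td n k) := by
  have hC : ∀ Y : YD n k,
      (Function.support fun p : ℕ × ℤ =>
        if h : ConcaveAt Y p.1 p.2 ∧ colour n p.1 p.2 = i then
          (qi n i ^ bExp i p.1 p.2 Y) • fockB (addY Y p.1 p.2 h.1) else 0).Finite := by
    intro Y
    apply Set.Finite.subset (concave_finite Y i)
    intro p hp
    by_contra hq
    exact hp (dif_neg hq)
  constructor
  · apply Finsupp.lhom_ext
    intro Y c
    have hsingle : (Finsupp.single Y c : Fock n k) = c • fockB Y := by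
      rw [fockB, Finsupp.smul_single, smul_eq_mul, mul_one]
    rw [hsingle, map_smul, map_smul]
    congr 1
    rw [LinearMap.comp_apply, LinearMap.smul_apply, LinearMap.comp_apply]
    have h1 : Fi n k i (fockB Y) = ∑ᶠ p : ℕ × ℤ,
        (if h : ConcaveAt Y p.1 p.2 ∧ colour n p.1 p.2 = i then
          (qi n i ^ bExp i p.1 p.2 Y) • fockB (addY Y p.1 p.2 h.1) else 0) := lift_fockB _ _
    have h2 : Tplus n k j (fockB Y)
        = (qi n j ^ ((cc j Y : ℤ) - (cx j Y : ℤ))) • fockB Y := lift_fockB _ _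
    rw [h1, h2, map_finsum_lin (Tplus n k j) (hC Y), map_smul, h1, smul_finsum, smul_finsum]
    refine finsum_congr fun p => ?_
    obtain ⟨l, z⟩ := p
    dsimp only
    by_cases hp : ConcaveAt Y l z ∧ colour n l z = i
    · rw [dif_pos hp]
      have h3 : Tplus n k j (fockB (addY Y l z hp.1))
          = (qi n j ^ ((cc j (addY Y l z hp.1) : ℤ) - (cx j (addY Y l z hp.1) : ℤ)))
            • fockB (addY Y l z hp.1) := lift_fockB _ _
      rw [map_smul, h3, smul_smul, smul_smul, smul_smul]
      congr 1
      have hd := ccx_change' (n := n) hn hj Y l z hp.1 hp.2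
      rw [hd, qi_zpow, qi_zpow, qi_zpow, ← zpow_add₀ fq_ne_zero, ← zpow_add₀ fq_ne_zero,
        ← zpow_add₀ fq_ne_zero]
      congr 1
      ring
    · rw [dif_neg hp, map_zero, smul_zero, smul_zero]
  · apply Finsupp.lhom_ext
    intro Y c
    have hsingle : (Finsupp.single Y c : Fock n k) = c • fockB Y := by
      rw [fockB, Finsupp.smul_single, smul_eq_mul, mul_one]
    rw [hsingle, map_smul, map_smul]
    congr 1
    rw [LinearMap.comp_apply, LinearMap.smul_apply, LinearMap.comp_apply]
    have h1 : Fi n k i (fockB Y) = ∑ᶠ p : ℕ × ℤ,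
        (if h : ConcaveAt Y p.1 p.2 ∧ colour n p.1 p.2 = i then
          (qi n i ^ bExp i p.1 p.2 Y) • fockB (addY Y p.1 p.2 h.1) else 0) := lift_fockB _ _
    have h2 : Td n k (fockB Y) = (fq ^ (-(boxes 0 Y : ℤ))) • fockB Y := lift_fockB _ _
    rw [h1, h2, map_finsum_lin (Td n k) (hC Y), map_smul, h1, smul_finsum, smul_finsum]
    refine finsum_congr fun p => ?_
    obtain ⟨l, z⟩ := p
    dsimp only
    by_cases hp : ConcaveAt Y l z ∧ colour n l z = i
    · rw [dif_pos hp]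
      have h3 : Td n k (fockB (addY Y l z hp.1))
          = (fq ^ (-(boxes 0 (addY Y l z hp.1) : ℤ))) • fockB (addY Y l z hp.1) := lift_fockB _ _
      rw [map_smul, h3, smul_smul, smul_smul, smul_smul]
      congr 1
      have hd := boxes_add' (n := n) Y l z hp.1 hp.2
      rw [show (-(boxes 0 (addY Y l z hp.1) : ℤ))
          = (-(if i = 0 then (1 : ℤ) else 0)) + (-(boxes 0 Y : ℤ)) by rw [hd]; ring,
        qi_zpow, zpow_add₀ fq_ne_zero, ← zpow_add₀ fq_ne_zero, ← zpow_add₀ fq_ne_zero,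
        ← zpow_add₀ fq_ne_zero]
      congr 1
      ring
    · rw [dif_neg hp, map_zero, smul_zero, smul_zero]

end
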